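/- Let F be a field and n a positive integer. Every matrix A in the electrical linear group EL_n(F) is symplectic, i.e., Aᵀ Ω A = Ω where Ω is the 2n×2n block matrix [[0, −I],[I, 0]], and fixes the vector c₀ = (1,…,1,0,…,0) (n ones followed by n zeros): A c₀ = c₀. -/

import Mathlib

open Module

/-- The generator `Ξ_j(t) = [[I, t E_{j,j}], [0, I]]` of the electrical linear group,
corresponding to adjoining a boundary spike at vertex `j`. -/
def XiD {F : Type*} [Field F] {n : ℕ} (j : Fin n) (t : F) :
    Matrix (Fin n ⊕ Fin n) (Fin n ⊕ Fin n) F :=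
  Matrix.fromBlocks 1 (Matrix.single j j t) 0 1

/-- The generator `Ξ_{i,j}(t) = [[I, 0], [t(E_{i,i} − E_{i,j} − E_{j,i} + E_{j,j}), I]]`
of the electrical linear group, corresponding to adjoining a boundary edge from `i` to `j`. -/
def XiOff {F : Type*} [Field F] {n : ℕ} (i j : Fin n) (t : F) :
    Matrix (Fin n ⊕ Fin n) (Fin n ⊕ Fin n) F :=
  Matrix.fromBlocks 1 0
    (t • (Matrix.single i i (1 : F) - Matrix.single i j 1
      - Matrix.single j i 1 + Matrix.single j j 1)) 1

/-- The generating set of the electrical linear group inside `GL_{2n}(F)`. -/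
def ELGen (F : Type*) [Field F] (n : ℕ) :
    Set ((Matrix (Fin n ⊕ Fin n) (Fin n ⊕ Fin n) F)ˣ) :=
  {A | (∃ j t, (A : Matrix (Fin n ⊕ Fin n) (Fin n ⊕ Fin n) F) = XiD j t) ∨
       (∃ i j t, i ≠ j ∧ (A : Matrix (Fin n ⊕ Fin n) (Fin n ⊕ Fin n) F) = XiOff i j t)}

/-- The electrical linear group `EL_n(F)`: the subgroup of `GL_{2n}(F)` generated by all
the matrices `Ξ_j(t)` and `Ξ_{i,j}(t)`. -/
def EL (F : Type*) [Field F] (n : ℕ) :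
    Subgroup ((Matrix (Fin n ⊕ Fin n) (Fin n ⊕ Fin n) F)ˣ) :=
  Subgroup.closure (ELGen F n)

open Matrix in
/-- The symplectic form matrix `Ω = [[0, −I], [I, 0]]`. -/
def OmegaMat (F : Type*) [Field F] (n : ℕ) :
    Matrix (Fin n ⊕ Fin n) (Fin n ⊕ Fin n) F :=
  Matrix.fromBlocks 0 (-1) 1 0

open Matrix in
lemma std_mulVec_one {F : Type*} [Field F] {n : ℕ} (a b : Fin n) (c : F) :
    (Matrix.single a b c).mulVec (1 : Fin n → F) = Pi.single a c := by
  ext k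
  simp [Matrix.mulVec, dotProduct, Matrix.single, Pi.single_apply, ite_and,
    Finset.sum_ite_eq, eq_comm]

open Matrix in
lemma lap_symm {F : Type*} [Field F] {n : ℕ} (i j : Fin n) (t : F) :
    (t • (Matrix.single i i (1 : F) - Matrix.single i j 1
      - Matrix.single j i 1 + Matrix.single j j 1))ᵀ =
    t • (Matrix.single i i (1 : F) - Matrix.single i j 1
      - Matrix.single j i 1 + Matrix.single j j 1) := by
  ext a b
  simp only [Matrix.transpose_apply, Matrix.smul_apply, Matrix.add_apply, Matrix.sub_apply,
    Matrix.single, Matrix.of_apply, and_comm, smul_eq_mul]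
  ring

open Matrix in
lemma lap_mulVec_one {F : Type*} [Field F] {n : ℕ} (i j : Fin n) (t : F) :
    (t • (Matrix.single i i (1 : F) - Matrix.single i j 1
      - Matrix.single j i 1 + Matrix.single j j 1)).mulVec (1 : Fin n → F) = 0 := by
  rw [Matrix.smul_mulVec, Matrix.add_mulVec, Matrix.sub_mulVec, Matrix.sub_mulVec]
  simp [std_mulVec_one]

open Matrix in
lemma upper_symp {F : Type*} [Field F] {n : ℕ}
    (S : Matrix (Fin n) (Fin n) F) (hS : Sᵀ = S) :
    (Matrix.fromBlocks 1 S 0 1)ᵀ * OmegaMat F n * Matrix.fromBlocks 1 S 0 1 = OmegaMat F n := by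
  simp [OmegaMat, Matrix.fromBlocks_transpose, Matrix.fromBlocks_multiply, hS]

open Matrix in
lemma lower_symp {F : Type*} [Field F] {n : ℕ}
    (T : Matrix (Fin n) (Fin n) F) (hT : Tᵀ = T) :
    (Matrix.fromBlocks 1 0 T 1)ᵀ * OmegaMat F n * Matrix.fromBlocks 1 0 T 1 = OmegaMat F n := by
  simp [OmegaMat, Matrix.fromBlocks_transpose, Matrix.fromBlocks_multiply, hT]

open Matrix in
/-- Every element of the electrical linear group `EL_n(F)` is a symplectic matrix
(`Aᵀ Ω A = Ω`) and fixes the vector `c₀ = (1,…,1,0,…,0)`. -/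
theorem stmt9 {F : Type*} [Field F] {n : ℕ} (hn : 0 < n) :
    ∀ A ∈ EL F n,
      (A : Matrix (Fin n ⊕ Fin n) (Fin n ⊕ Fin n) F)ᵀ * OmegaMat F n
          * (A : Matrix (Fin n ⊕ Fin n) (Fin n ⊕ Fin n) F) = OmegaMat F n ∧
      (A : Matrix (Fin n ⊕ Fin n) (Fin n ⊕ Fin n) F).mulVec
          (Sum.elim (1 : Fin n → F) (0 : Fin n → F))
        = Sum.elim (1 : Fin n → F) (0 : Fin n → F) := by
  intro A hA
  induction hA using Subgroup.closure_induction with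
  | mem A hA =>
    rcases hA with ⟨j, t, h⟩ | ⟨i, j, t, hij, h⟩
    · rw [h]
      constructor
      · exact upper_symp _ (by ext a b; simp [Matrix.single, and_comm])
      · unfold XiD
        rw [Matrix.fromBlocks_mulVec]
        simp
    · rw [h]
      constructor
      · exact lower_symp _ (lap_symm i j t)
      · unfold XiOff
        rw [Matrix.fromBlocks_mulVec]
        simp only [Sum.elim_comp_inl, Sum.elim_comp_inr]
        rw [lap_mulVec_one]
        simp
  | one => simp
  | mul A B _ _ hA hB =>
    obtain ⟨hA1, hA2⟩ := hA
    obtain ⟨hB1, hB2⟩ := hB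
    constructor
    · rw [Units.val_mul, Matrix.transpose_mul]
      have key : (B : Matrix (Fin n ⊕ Fin n) (Fin n ⊕ Fin n) F)ᵀ
            * ((A : Matrix (Fin n ⊕ Fin n) (Fin n ⊕ Fin n) F)ᵀ * OmegaMat F n
              * (A : Matrix (Fin n ⊕ Fin n) (Fin n ⊕ Fin n) F))
            * (B : Matrix (Fin n ⊕ Fin n) (Fin n ⊕ Fin n) F)
          = OmegaMat F n := by rw [hA1]; exact hB1
      conv_rhs => rw [← key]
      simp only [Matrix.mul_assoc]
    · rw [Units.val_mul, ← Matrix.mulVec_mulVec, hB2, hA2]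
  | inv A _ hA =>
    obtain ⟨hA1, hA2⟩ := hA
    have hAval : ((A⁻¹ : _ˣ) : Matrix (Fin n ⊕ Fin n) (Fin n ⊕ Fin n) F) * A = 1 := by
      rw [← Units.val_mul, inv_mul_cancel, Units.val_one]
    have hAval' : (A : Matrix (Fin n ⊕ Fin n) (Fin n ⊕ Fin n) F) * ((A⁻¹ : _ˣ) : Matrix _ _ F) = 1 := by
      rw [← Units.val_mul, mul_inv_cancel, Units.val_one]
    constructor
    · calc (((A⁻¹ : _ˣ) : Matrix (Fin n ⊕ Fin n) (Fin n ⊕ Fin n) F))ᵀ * OmegaMat F n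
              * ((A⁻¹ : _ˣ) : Matrix (Fin n ⊕ Fin n) (Fin n ⊕ Fin n) F)
          = (((A⁻¹ : _ˣ) : Matrix (Fin n ⊕ Fin n) (Fin n ⊕ Fin n) F))ᵀ
              * ((A : Matrix (Fin n ⊕ Fin n) (Fin n ⊕ Fin n) F)ᵀ * OmegaMat F n
                * (A : Matrix (Fin n ⊕ Fin n) (Fin n ⊕ Fin n) F))
              * ((A⁻¹ : _ˣ) : Matrix (Fin n ⊕ Fin n) (Fin n ⊕ Fin n) F) := by rw [hA1]
        _ = ((A : Matrix (Fin n ⊕ Fin n) (Fin n ⊕ Fin n) F)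
              * ((A⁻¹ : _ˣ) : Matrix (Fin n ⊕ Fin n) (Fin n ⊕ Fin n) F))ᵀ * OmegaMat F n
              * ((A : Matrix (Fin n ⊕ Fin n) (Fin n ⊕ Fin n) F)
                * ((A⁻¹ : _ˣ) : Matrix (Fin n ⊕ Fin n) (Fin n ⊕ Fin n) F)) := by
            rw [Matrix.transpose_mul]
            simp only [Matrix.mul_assoc]
        _ = OmegaMat F n := by rw [hAval']; simp
    · have h2 := congrArg
        (fun M : Matrix (Fin n ⊕ Fin n) (Fin n ⊕ Fin n) F =>
          M.mulVec (Sum.elim (1 : Fin n → F) (0 : Fin n → F))) hAval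
      rw [Matrix.one_mulVec, ← Matrix.mulVec_mulVec, hA2] at h2
      exact h2
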